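/- Let X and V be real normed vector spaces and let T : X → V be a compact continuous linear operator, i.e., the image under T of every bounded set is totally bounded. Let ι be an index type with a mesh-size function h : ι → ℝ, and let S : ι → Submodule ℝ V assign to each index a linear subspace of V. Assume that for every v ∈ V and every ε > 0 there exists δ > 0 such that every index i with h i ≤ δ satisfies infDist(v, S i) < ε. Then for every ε > 0 there exists δ > 0 such that for every g ∈ X and every index i with h i ≤ δ one has infDist(T g, S i) ≤ ε · ‖g‖. -/
import Mathlib

/-- Homogeneity of `infDist` with respect to a submodule. -/
lemma infDist_smul_submodule {V : Type*} [NormedAddCommGroup V] [NormedSpace ℝ V]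
    (S : Submodule ℝ V) (c : ℝ) (hc : 0 ≤ c) (v : V) :
    Metric.infDist (c • v) (S : Set V) ≤ c * Metric.infDist v (S : Set V) := by
  have hne : (S : Set V).Nonempty := ⟨0, S.zero_mem⟩
  have : Nonempty (S : Set V) := hne.to_subtype
  rw [Metric.infDist_eq_iInf (x := v), Real.mul_iInf_of_nonneg hc]
  refine le_ciInf fun y => ?_
  calc Metric.infDist (c • v) (S : Set V)
      ≤ dist (c • v) (c • (y : V)) :=
        Metric.infDist_le_dist_of_mem (S.smul_mem c y.2)
    _ = c * dist v (y : V) := by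
        rw [dist_smul₀, Real.norm_eq_abs, abs_of_nonneg hc]

/-- Abstract core of Lemma 4 (uniform approximation of solutions): if
`T : X → V` is a compact continuous linear operator (images of bounded sets
are totally bounded) and every vector of `V` can be approximated with
arbitrary accuracy by the linear subspaces `S i` for sufficiently small mesh
size `h i`, then for every `ε > 0` there is a mesh-size threshold `δ > 0`
such that `infDist (T g) (S i) ≤ ε * ‖g‖` whenever `h i ≤ δ`. -/
theorem uniform_approximation_of_solutions
    {X V : Type*} [NormedAddCommGroup X] [NormedSpace ℝ X]
    [NormedAddCommGroup V] [NormedSpace ℝ V]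
    (T : X →L[ℝ] V)
    (hT : ∀ s : Set X, Bornology.IsBounded s → TotallyBounded (T '' s))
    {ι : Type*} (h : ι → ℝ) (S : ι → Submodule ℝ V)
    (happrox : ∀ v : V, ∀ ε > (0 : ℝ), ∃ δ > (0 : ℝ),
      ∀ i, h i ≤ δ → Metric.infDist v (S i : Set V) < ε) :
    ∀ ε > (0 : ℝ), ∃ δ > (0 : ℝ),
      ∀ g : X, ∀ i, h i ≤ δ → Metric.infDist (T g) (S i : Set V) ≤ ε * ‖g‖ := by
  intro ε hε
  -- finite ε/2-net of the image of the unit ball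
  have htb := hT (Metric.closedBall 0 1) Metric.isBounded_closedBall
  obtain ⟨t, htfin, htcov⟩ :=
    (Metric.totallyBounded_iff.1 htb) (ε / 2) (by linarith)
  -- for each net point choose a threshold
  choose! D hD hDlt using fun v => happrox v (ε / 2) (by linarith)
  -- uniform threshold over the finite net
  set F : Finset ℝ := insert 1 (htfin.toFinset.image D) with hF
  have hFne : F.Nonempty := ⟨1, Finset.mem_insert_self _ _⟩
  refine ⟨F.min' hFne, ?_, ?_⟩
  · apply lt_of_lt_of_le _ (le_refl _)
    rcases Finset.min'_mem F hFne with hm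
    rcases Finset.mem_insert.1 hm with h1 | h2
    · rw [h1]; norm_num
    · obtain ⟨y, _, hy⟩ := Finset.mem_image.1 h2
      rw [← hy]; exact hD y
  · intro g i hi
    have hδle : ∀ y ∈ t, Metric.infDist y (S i : Set V) < ε / 2 := by
      intro y hy
      refine hDlt y i (le_trans hi ?_)
      exact Finset.min'_le F (D y)
        (Finset.mem_insert_of_mem (Finset.mem_image_of_mem D (htfin.mem_toFinset.2 hy)))
    by_cases hg : g = 0
    · simp [hg, Metric.infDist_zero_of_mem (S i).zero_mem, mul_nonneg hε.le (norm_nonneg _)]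
    · have hgn : 0 < ‖g‖ := norm_pos_iff.2 hg
      set u : X := ‖g‖⁻¹ • g with hu
      have hunorm : ‖u‖ = 1 := by
        rw [hu, norm_smul, norm_inv, norm_norm, inv_mul_cancel₀ hgn.ne']
      have hmem : T u ∈ T '' Metric.closedBall 0 1 :=
        ⟨u, by simp [hunorm], rfl⟩
      obtain ⟨y, hy, hyd⟩ := Set.mem_iUnion₂.1 (htcov hmem)
      have h1 : Metric.infDist (T u) (S i : Set V) < ε := by
        calc Metric.infDist (T u) (S i : Set V)
            ≤ Metric.infDist y (S i : Set V) + dist (T u) y :=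
              Metric.infDist_le_infDist_add_dist
          _ < ε / 2 + ε / 2 := by
              have := Metric.mem_ball.1 hyd
              have := hδle y hy
              linarith
          _ = ε := by ring
      have hTg : T g = ‖g‖ • T u := by
        rw [hu, map_smul, smul_smul, mul_inv_cancel₀ hgn.ne', one_smul]
      calc Metric.infDist (T g) (S i : Set V)
          = Metric.infDist (‖g‖ • T u) (S i : Set V) := by rw [hTg]
        _ ≤ ‖g‖ * Metric.infDist (T u) (S i : Set V) :=
            infDist_smul_submodule _ _ (norm_nonneg g) _
        _ ≤ ‖g‖ * ε := by
            exact mul_le_mul_of_nonneg_left h1.le (norm_nonneg g)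
        _ = ε * ‖g‖ := mul_comm _ _
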